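/- If f : ℝ² → ℝ is strictly convex and a, (b_n) ∈ ℝ² satisfy (1/2)f(a) + (1/2)f(b_n) − f((a+b_n)/2) → 0, and (b_n) is bounded, then b_n → a. -/

import Mathlib

open Filter

local notation "E2" => EuclideanSpace ℝ (Fin 2)

/-- If `f : ℝ² → ℝ` is strictly convex, `(b_n)` is bounded, and the convexity defects
`(1/2) f(a) + (1/2) f(b_n) − f((a+b_n)/2)` tend to `0`, then `b_n → a`. -/
theorem tendsto_of_strictConvex_defect
    (f : E2 → ℝ) (hf : StrictConvexOn ℝ Set.univ f)
    (a : E2) (b : ℕ → E2) (M : ℝ) (hb : ∀ n, ‖b n‖ ≤ M)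
    (hdefect : Tendsto
      (fun n => (1/2) * f a + (1/2) * f (b n) - f ((2:ℝ)⁻¹ • (a + b n)))
      atTop (nhds 0)) :
    Tendsto b atTop (nhds a) := by
  have hfc : Continuous f := by
    rw [← continuousOn_univ]
    exact hf.convexOn.continuousOn isOpen_univ
  apply tendsto_of_subseq_tendsto
  intro ns hns
  have hbdd : Bornology.IsBounded (Metric.closedBall (0 : E2) M) :=
    Metric.isBounded_closedBall
  obtain ⟨c, hc, φ, hφ, hcf⟩ := tendsto_subseq_of_bounded hbdd
    (x := fun n => b (ns n)) (fun n => by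
      simpa [Metric.mem_closedBall, dist_eq_norm] using hb (ns n))
  have hca : c = a := by
    by_contra hne
    -- defect along the sub-subsequence tends to the defect at c
    have h1 : Tendsto (fun n => (1/2) * f a + (1/2) * f (b (ns (φ n)))
        - f ((2:ℝ)⁻¹ • (a + b (ns (φ n))))) atTop
        (nhds ((1/2) * f a + (1/2) * f c - f ((2:ℝ)⁻¹ • (a + c)))) := by
      apply Tendsto.sub
      · exact (tendsto_const_nhds.add ((hfc.tendsto c).comp hcf |>.const_mul _))
      · exact (hfc.tendsto _).comp ((tendsto_const_nhds.add hcf).const_smul _)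
    have h2 : Tendsto (fun n => (1/2) * f a + (1/2) * f (b (ns (φ n)))
        - f ((2:ℝ)⁻¹ • (a + b (ns (φ n))))) atTop (nhds 0) :=
      hdefect.comp (hns.comp hφ.tendsto_atTop)
    have heq : (1/2) * f a + (1/2) * f c - f ((2:ℝ)⁻¹ • (a + c)) = 0 :=
      tendsto_nhds_unique h1 h2
    have hstrict := hf.2 (Set.mem_univ a) (Set.mem_univ c) (Ne.symm hne)
      (by norm_num : (0:ℝ) < 1/2) (by norm_num : (0:ℝ) < 1/2) (by norm_num)
    have : (2:ℝ)⁻¹ • (a + c) = (1/2 : ℝ) • a + (1/2 : ℝ) • c := by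
      rw [smul_add]; norm_num
    rw [this] at heq
    rw [smul_eq_mul, smul_eq_mul] at hstrict
    linarith
  exact ⟨φ, hca ▸ hcf⟩
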